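/- For nonnegative integers n,k, ∑_{π ∈ P(n,k)} w^{rlmin(π)} = C(n,k) · (w+k)(w+k+1)⋯(w+n-1), where the product is the rising factorial from w+k to w+n-1 (and equals 1 when k=n). -/

import Mathlib

namespace PP

def isPP {n : ℕ} (M : Fin n → Fin n → Bool) : Prop :=
  (∀ i j j', M i j = true → M i j' = true → j = j') ∧
  (∀ i i' j, M i j = true → M i' j = true → i = i')

def zeroRows {n : ℕ} (M : Fin n → Fin n → Bool) : ℕ :=
  (Finset.univ.filter (fun i : Fin n => ∀ j, M i j = false)).card

def invStat {n : ℕ} (M : Fin n → Fin n → Bool) : ℕ :=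
  (Finset.univ.filter (fun p : Fin n × Fin n =>
    M p.1 p.2 = false ∧ (∀ j' < p.2, M p.1 j' = false) ∧ (∀ i' < p.1, M i' p.2 = false) ∧
    ((∃ j', M p.1 j' = true) ∨ (∃ i', M i' p.2 = true)))).card

def rlminStat {n : ℕ} (M : Fin n → Fin n → Bool) : ℕ :=
  (Finset.univ.filter (fun p : Fin n × Fin n =>
    M p.1 p.2 = true ∧ ∀ l < p.2, ∃ i' < p.1, M i' l = true)).card

def excStat {n : ℕ} (M : Fin n → Fin n → Bool) : ℕ :=
  (Finset.univ.filter (fun p : Fin n × Fin n => M p.1 p.2 = true ∧ p.1 < p.2)).card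

def wexStat {n : ℕ} (M : Fin n → Fin n → Bool) : ℕ :=
  (Finset.univ.filter (fun p : Fin n × Fin n => M p.1 p.2 = true ∧ p.1 ≤ p.2)).card

def reachN {n : ℕ} (M : Fin n → Fin n → Bool) : ℕ → Fin n → Fin n → Prop
  | 0, i, j => i = j
  | m+1, i, j => ∃ l, M i l = true ∧ reachN M m l j

noncomputable def cycStat {n : ℕ} (M : Fin n → Fin n → Bool) : ℕ :=
  Nat.card {i : Fin n // (∃ m, 0 < m ∧ reachN M m i i) ∧ ∀ j, (∃ m, reachN M m i j) → j ≤ i}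

def fixStat {n : ℕ} (M : Fin n → Fin n → Bool) : ℕ :=
  (Finset.univ.filter (fun i : Fin n => M i i = true)).card

noncomputable def cycGe2Stat {n : ℕ} (M : Fin n → Fin n → Bool) : ℕ :=
  Nat.card {i : Fin n // (∃ m, 0 < m ∧ reachN M m i i) ∧ (∀ j, (∃ m, reachN M m i j) → j ≤ i) ∧ M i i = false}

def Conn {n : ℕ} (M : Fin n → Fin n → Bool) : Prop :=
  ∀ i : ℕ, 0 < i → i < n → ∃ r : Fin n, r.1 < i ∧ ∀ c : Fin n, c.1 < i → M r c = false

def UpDownFrom {n : ℕ} (M : Fin n → Fin n → Bool) (i : Fin n) : Prop :=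
  ∀ (m : ℕ) (a b : Fin n),
    (∀ m', 1 ≤ m' → m' ≤ m + 1 → ¬ reachN M m' i i) →
    reachN M m i a → M a b = true →
    ((Even m → a < b) ∧ (¬ Even m → b < a))

def CUD {n : ℕ} (M : Fin n → Fin n → Bool) : Prop :=
  (∀ i : Fin n,
      ((∃ m, 0 < m ∧ reachN M m i i) ∧ ∀ j, (∃ m, reachN M m i j) → i ≤ j) →
      UpDownFrom M i) ∧
  (∀ i : Fin n, (∀ i', M i' i = false) → UpDownFrom M i)

def desStat {n : ℕ} (M : Fin n → Fin n → Bool) : ℕ :=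
  (Finset.univ.filter (fun p : Fin n × Fin n =>
      M p.1 p.2 = true ∧ ∃ h : p.1.1 + 1 < n, ∃ b : Fin n, M ⟨p.1.1 + 1, h⟩ b = true ∧ b < p.2)).card
  + (Finset.univ.filter (fun p : Fin n =>
      (∀ j, M p j = false) ∧ ∃ _h : 0 < p.1, ∃ a j : Fin n,
        M ⟨p.1 - 1, Nat.lt_of_le_of_lt (Nat.sub_le _ _) p.isLt⟩ a = true ∧
        (∀ i, M i j = false) ∧
        (Finset.univ.filter (fun m : Fin n => (∀ i, M i m = false) ∧ m < j)).card
          = (Finset.univ.filter (fun r : Fin n => (∀ c, M r c = false) ∧ r < p)).card ∧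
        j < a)).card

def gbinom {R : Type*} [CommRing R] (q : R) : ℕ → ℕ → R
  | _, 0 => 1
  | 0, _+1 => 0
  | n+1, k+1 => gbinom q n k + q ^ (k+1) * gbinom q n (k+1)

end PP



namespace Aux
open Finset Polynomial

variable {m n : ℕ}

def pp (M : Fin m → Fin n → Bool) : Prop :=
  (∀ i j j', M i j = true → M i j' = true → j = j') ∧
  (∀ i i' j, M i j = true → M i' j = true → i = i')

def zr (M : Fin m → Fin n → Bool) : ℕ :=
  (Finset.univ.filter (fun i : Fin m => ∀ j, M i j = false)).card

def rl (M : Fin m → Fin n → Bool) : ℕ :=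
  (Finset.univ.filter (fun p : Fin m × Fin n =>
    M p.1 p.2 = true ∧ ∀ l < p.2, ∃ i' < p.1, M i' l = true)).card

open scoped Classical in
noncomputable def T (m n k : ℕ) : Polynomial ℤ :=
  ∑ M : Fin m → Fin n → Bool, if pp M ∧ zr M = k then X ^ rl M else 0


lemma pp_snoc (N : Fin m → Fin n → Bool) (a : Fin n → Bool) :
    pp (Fin.snoc N a : Fin (m+1) → Fin n → Bool) ↔
      pp N ∧ (∀ j j', a j = true → a j' = true → j = j') ∧
        (∀ j, a j = true → ∀ i, N i j = false) := by
  constructor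
  · rintro ⟨hr, hc⟩
    refine ⟨⟨fun i j j' h h' => ?_, fun i i' j h h' => ?_⟩, fun j j' h h' => ?_, fun j hj i => ?_⟩
    · exact hr i.castSucc j j' (by rwa [Fin.snoc_castSucc]) (by rwa [Fin.snoc_castSucc])
    · have := hc i.castSucc i'.castSucc j (by rwa [Fin.snoc_castSucc]) (by rwa [Fin.snoc_castSucc])
      exact Fin.castSucc_injective _ this
    · exact hr (Fin.last m) j j' (by rwa [Fin.snoc_last]) (by rwa [Fin.snoc_last])
    · by_contra hN
      have hN' : N i j = true := by
        cases h : N i j with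
        | false => exact absurd h hN
        | true => rfl
      have := hc i.castSucc (Fin.last m) j (by rwa [Fin.snoc_castSucc]) (by rwa [Fin.snoc_last])
      exact absurd this (Fin.ne_last_of_lt (Fin.castSucc_lt_last i))
  · rintro ⟨⟨hr, hc⟩, ha, hint⟩
    constructor
    · intro i j j'
      refine Fin.lastCases ?_ ?_ i
      · rw [Fin.snoc_last]; exact ha j j'
      · intro i; rw [Fin.snoc_castSucc]; exact hr i j j'
    · intro i i' j
      refine Fin.lastCases ?_ ?_ i
      · refine Fin.lastCases ?_ ?_ i'
        · intros; rfl
        · intro i' h h'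
          rw [Fin.snoc_last] at h
          rw [Fin.snoc_castSucc] at h'
          exact absurd h' (by simp [hint j h i'])
      · intro i
        refine Fin.lastCases ?_ ?_ i'
        · intro h h'
          rw [Fin.snoc_castSucc] at h
          rw [Fin.snoc_last] at h'
          exact absurd h (by simp [hint j h' i])
        · intro i' h h'
          rw [Fin.snoc_castSucc] at h h'
          exact congrArg Fin.castSucc (hc i i' j h h')


lemma zr_snoc (N : Fin m → Fin n → Bool) (a : Fin n → Bool) :
    zr (Fin.snoc N a : Fin (m+1) → Fin n → Bool) = zr N + (if ∀ j, a j = false then 1 else 0) := by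
  classical
  unfold zr
  rw [Finset.card_filter, Finset.card_filter, Fin.sum_univ_castSucc]
  simp only [Fin.snoc_castSucc, Fin.snoc_last]


lemma ex_lt_castSucc (N : Fin m → Fin n → Bool) (a : Fin n → Bool) (i : Fin m) (l : Fin n) :
    (∃ i' < Fin.castSucc i, (Fin.snoc N a : Fin (m+1) → Fin n → Bool) i' l = true) ↔
      (∃ i'' < i, N i'' l = true) := by
  constructor
  · rintro ⟨i', hlt, h⟩
    have hv : i'.1 < i.1 := hlt
    refine ⟨⟨i'.1, lt_trans hv i.2⟩, hv, ?_⟩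
    have he : i' = Fin.castSucc ⟨i'.1, lt_trans hv i.2⟩ := Fin.ext rfl
    rw [he, Fin.snoc_castSucc] at h
    exact h
  · rintro ⟨i'', hlt, h⟩
    exact ⟨Fin.castSucc i'', by exact_mod_cast hlt, by rwa [Fin.snoc_castSucc]⟩

lemma ex_lt_last (N : Fin m → Fin n → Bool) (a : Fin n → Bool) (l : Fin n) :
    (∃ i' < Fin.last m, (Fin.snoc N a : Fin (m+1) → Fin n → Bool) i' l = true) ↔
      (∃ i : Fin m, N i l = true) := by
  constructor
  · rintro ⟨i', hlt, h⟩
    have hv : i'.1 < m := hlt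
    refine ⟨⟨i'.1, hv⟩, ?_⟩
    have he : i' = Fin.castSucc ⟨i'.1, hv⟩ := Fin.ext rfl
    rw [he, Fin.snoc_castSucc] at h
    exact h
  · rintro ⟨i, h⟩
    exact ⟨Fin.castSucc i, Fin.castSucc_lt_last i, by rwa [Fin.snoc_castSucc]⟩


lemma rl_snoc (N : Fin m → Fin n → Bool) (a : Fin n → Bool) :
    rl (Fin.snoc N a : Fin (m+1) → Fin n → Bool)
      = rl N + (Finset.univ.filter
          (fun j : Fin n => a j = true ∧ ∀ l < j, ∃ i : Fin m, N i l = true)).card := by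
  classical
  unfold rl
  rw [Finset.card_filter, Finset.card_filter, Finset.card_filter,
    Fintype.sum_prod_type, Fin.sum_univ_castSucc, Fintype.sum_prod_type]
  congr 1
  · refine Finset.sum_congr rfl fun i _ => Finset.sum_congr rfl fun j _ => ?_
    refine if_congr (and_congr ?_ ?_) rfl rfl
    · rw [Fin.snoc_castSucc]
    · exact forall₂_congr fun l _ => ex_lt_castSucc N a i l
  · refine Finset.sum_congr rfl fun j _ => ?_
    refine if_congr (and_congr ?_ ?_) rfl rfl
    · rw [Fin.snoc_last]
    · exact forall₂_congr fun l _ => ex_lt_last N a l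


lemma card_subsingleton {α : Type*} (s : Finset α) (h : ∀ x ∈ s, ∀ y ∈ s, x = y) :
    s.card = if s.Nonempty then 1 else 0 := by
  rcases s.eq_empty_or_nonempty with rfl | hs
  · simp
  · rw [if_pos hs]
    obtain ⟨x, hx⟩ := hs
    rw [Finset.eq_singleton_iff_unique_mem.2 ⟨hx, fun y hy => h y hy x hx⟩]
    simp

lemma zr_le (M : Fin m → Fin n → Bool) : zr M ≤ m := by
  simpa [zr] using Finset.card_filter_le (univ : Finset (Fin m)) _

lemma used_card (N : Fin m → Fin n → Bool) (h : pp N) :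
    ((Finset.univ : Finset (Fin n)).filter (fun j => ∃ i, N i j = true)).card = m - zr N := by
  classical
  have key : ((Finset.univ : Finset (Fin n)).filter (fun j => ∃ i, N i j = true)).card
      = ((Finset.univ : Finset (Fin m)).filter (fun i => ∃ j, N i j = true)).card := by
    rw [Finset.card_filter, Finset.card_filter]
    have hrow : ∀ i : Fin m, (if ∃ j, N i j = true then 1 else 0)
        = ((Finset.univ : Finset (Fin n)).filter (fun j => N i j = true)).card := by
      intro i
      have huniq : ∀ x ∈ (Finset.univ : Finset (Fin n)).filter (fun j => N i j = true),
          ∀ y ∈ (Finset.univ : Finset (Fin n)).filter (fun j => N i j = true), x = y := by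
        intro x hx y hy
        simp only [Finset.mem_filter] at hx hy
        exact h.1 i x y hx.2 hy.2
      rw [card_subsingleton _ huniq]
      congr 1
      simp [Finset.filter_nonempty_iff]
    have hcol : ∀ j : Fin n, (if ∃ i, N i j = true then 1 else 0)
        = ((Finset.univ : Finset (Fin m)).filter (fun i => N i j = true)).card := by
      intro j
      have huniq : ∀ x ∈ (Finset.univ : Finset (Fin m)).filter (fun i => N i j = true),
          ∀ y ∈ (Finset.univ : Finset (Fin m)).filter (fun i => N i j = true), x = y := by
        intro x hx y hy
        simp only [Finset.mem_filter] at hx hy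
        exact h.2 x y j hx.2 hy.2
      rw [card_subsingleton _ huniq]
      congr 1
      simp [Finset.filter_nonempty_iff]
    calc ∑ j : Fin n, (if ∃ i, N i j = true then 1 else 0)
        = ∑ j : Fin n, ∑ i : Fin m, (if N i j = true then 1 else 0) := by
          refine Finset.sum_congr rfl fun j _ => ?_
          rw [hcol j, Finset.card_filter]
      _ = ∑ i : Fin m, ∑ j : Fin n, (if N i j = true then 1 else 0) := Finset.sum_comm
      _ = ∑ i : Fin m, (if ∃ j, N i j = true then 1 else 0) := by
          refine Finset.sum_congr rfl fun i _ => ?_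
          rw [hrow i, Finset.card_filter]
  rw [key]
  have hsplit := Finset.card_filter_add_card_filter_not
    (s := (Finset.univ : Finset (Fin m))) (p := fun i => ∀ j, N i j = false)
  have heq : (Finset.univ.filter (fun i : Fin m => ¬ ∀ j, N i j = false))
      = Finset.univ.filter (fun i : Fin m => ∃ j, N i j = true) := by
    refine Finset.filter_congr fun i _ => ?_
    push_neg
    simp
  rw [heq] at hsplit
  have hcu : (Finset.univ : Finset (Fin m)).card = m := by simp
  unfold zr
  omega

lemma sum_unused (U : Finset (Fin n)) (hU : U.Nonempty) :
    (∑ j ∈ U, (X : Polynomial ℤ) ^ (if ∀ l < j, l ∉ U then 1 else 0))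
      = X + ((U.card - 1 : ℕ) : Polynomial ℤ) := by
  classical
  set j0 := U.min' hU with hj0
  have hmem : j0 ∈ U := U.min'_mem hU
  have hiff : ∀ j ∈ U, ((∀ l < j, l ∉ U) ↔ j = j0) := by
    intro j hj
    constructor
    · intro hall
      refine le_antisymm ?_ (U.min'_le j hj)
      by_contra hlt
      push_neg at hlt
      exact hall j0 hlt hmem
    · rintro rfl l hl hlU
      exact absurd (U.min'_le l hlU) (not_le.2 hl)
  calc (∑ j ∈ U, (X : Polynomial ℤ) ^ (if ∀ l < j, l ∉ U then 1 else 0))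
      = ∑ j ∈ U, ((if j = j0 then (X : Polynomial ℤ) - 1 else 0) + 1) := by
        refine Finset.sum_congr rfl fun j hj => ?_
        rw [if_congr (hiff j hj) rfl rfl]
        split <;> simp
    _ = (X - 1) + (U.card : Polynomial ℤ) := by
        rw [Finset.sum_add_distrib, Finset.sum_ite_eq' U j0 (fun _ => (X : Polynomial ℤ) - 1),
          if_pos hmem]
        simp [mul_comm]
    _ = X + ((U.card - 1 : ℕ) : Polynomial ℤ) := by
        have h1 : 1 ≤ U.card := Finset.card_pos.2 hU
        have : ((U.card - 1 : ℕ) : Polynomial ℤ) = (U.card : Polynomial ℤ) - 1 := by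
          push_cast [Nat.cast_sub h1]
          ring
        rw [this]; ring

lemma sum_row {R : Type*} [AddCommMonoid R] (Φ : (Fin n → Bool) → R)
    (h : ∀ a : Fin n → Bool, (∃ j j', j ≠ j' ∧ a j = true ∧ a j' = true) → Φ a = 0) :
    (∑ a : Fin n → Bool, Φ a)
      = Φ (fun _ => false) + ∑ j : Fin n, Φ (fun j' => decide (j' = j)) := by
  classical
  set s : Finset (Fin n → Bool) :=
    insert (fun _ => false) (Finset.univ.image fun j : Fin n => fun j' => decide (j' = j)) with hs
  have hzero : ∀ a ∈ (Finset.univ : Finset (Fin n → Bool)), a ∉ s → Φ a = 0 := by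
    intro a _ ha
    refine h a ?_
    by_contra hno
    push_neg at hno
    apply ha
    rcases Classical.em (∃ j0, a j0 = true) with ⟨j0, hj0⟩ | hnone
    · have : a = fun j' => decide (j' = j0) := by
        funext j'
        by_cases hc : a j' = true
        · have hee : j' = j0 := by
            by_contra hne
            exact (hno j' j0 hne hc) hj0
          simp [hee, hj0]
        · have hee : j' ≠ j0 := fun he => hc (he ▸ hj0)
          rw [decide_eq_false hee]
          simpa using hc
      rw [this, hs]
      exact Finset.mem_insert_of_mem (Finset.mem_image_of_mem _ (Finset.mem_univ j0))
    · have : a = fun _ => false := by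
        funext j'
        cases hc : a j' with
        | false => rfl
        | true => exact absurd ⟨j', hc⟩ hnone
      rw [this, hs]
      exact Finset.mem_insert_self _ _
  rw [← Finset.sum_subset (Finset.subset_univ s) hzero, hs,
    Finset.sum_insert, Finset.sum_image]
  · intro j _ j' _ hjj
    have := congrFun hjj j
    simpa using this.symm
  · intro hmem
    rw [Finset.mem_image] at hmem
    obtain ⟨j, _, hj⟩ := hmem
    have := congrFun hj j
    simp at this


lemma T_succ (hmn : m + 1 ≤ n) (k : ℕ) :
    T (m+1) n k = (if k = 0 then 0 else T m n (k-1))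
      + (X + ((n - m - 1 + k : ℕ) : Polynomial ℤ)) * T m n k := by
  classical
  set c : ℕ := n - m - 1 + k with hc
  have h1 : T (m+1) n k = ∑ p : (Fin n → Bool) × (Fin m → Fin n → Bool),
      (if pp (Fin.snoc p.2 p.1 : Fin (m+1) → Fin n → Bool)
            ∧ zr (Fin.snoc p.2 p.1 : Fin (m+1) → Fin n → Bool) = k
        then (X : Polynomial ℤ) ^ rl (Fin.snoc p.2 p.1 : Fin (m+1) → Fin n → Bool) else 0) := by
    rw [T]
    exact (Fintype.sum_equiv (Fin.snocEquiv (fun _ => Fin n → Bool))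
      _ (fun M => if pp M ∧ zr M = k then (X : Polynomial ℤ) ^ rl M else 0) (fun p => rfl)).symm
  rw [h1, Fintype.sum_prod_type, Finset.sum_comm]
  have hinner : ∀ N : Fin m → Fin n → Bool,
      (∑ a : Fin n → Bool, (if pp (Fin.snoc N a : Fin (m+1) → Fin n → Bool)
            ∧ zr (Fin.snoc N a : Fin (m+1) → Fin n → Bool) = k
        then (X : Polynomial ℤ) ^ rl (Fin.snoc N a : Fin (m+1) → Fin n → Bool) else 0))
      = (if pp N ∧ zr N + 1 = k then (X : Polynomial ℤ) ^ rl N else 0)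
        + (if pp N ∧ zr N = k then (X : Polynomial ℤ) ^ rl N * (X + (c : Polynomial ℤ)) else 0) := by
    intro N
    rw [sum_row _ (fun a ⟨j, j', hne, hj, hj'⟩ => if_neg (fun hcon => hne ((pp_snoc N a).1 hcon.1 |>.2.1 j j' hj hj')))]
    congr 1
    · -- a = const false
      have hp : pp (Fin.snoc N (fun _ => false) : Fin (m+1) → Fin n → Bool) ↔ pp N := by
        rw [pp_snoc]
        simp
      have hz : zr (Fin.snoc N (fun _ => false) : Fin (m+1) → Fin n → Bool) = zr N + 1 := by
        rw [zr_snoc]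
        simp
      have hr : rl (Fin.snoc N (fun _ => false) : Fin (m+1) → Fin n → Bool) = rl N := by
        rw [rl_snoc]
        simp
      rw [hz, hr]
      exact if_congr (and_congr hp Iff.rfl) rfl rfl
    · -- sum over indicators
      have hterm : ∀ j : Fin n,
          (if pp (Fin.snoc N (fun j' => decide (j' = j)) : Fin (m+1) → Fin n → Bool)
              ∧ zr (Fin.snoc N (fun j' => decide (j' = j)) : Fin (m+1) → Fin n → Bool) = k
            then (X : Polynomial ℤ) ^ rl (Fin.snoc N (fun j' => decide (j' = j)) : Fin (m+1) → Fin n → Bool) else 0)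
          = (if (pp N ∧ (∀ i, N i j = false)) ∧ zr N = k
              then (X : Polynomial ℤ) ^ (rl N + (if ∀ l < j, ∃ i : Fin m, N i l = true then 1 else 0)) else 0) := by
        intro j
        have hp : pp (Fin.snoc N (fun j' => decide (j' = j)) : Fin (m+1) → Fin n → Bool)
            ↔ pp N ∧ ∀ i, N i j = false := by
          rw [pp_snoc]
          constructor
          · rintro ⟨hh1, _, hh3⟩
            exact ⟨hh1, hh3 j (by simp)⟩
          · rintro ⟨hh1, hh3⟩
            refine ⟨hh1, fun j1 j2 e1 e2 => ?_, fun j' e i => ?_⟩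
            · simp only [decide_eq_true_eq] at e1 e2
              rw [e1, e2]
            · simp only [decide_eq_true_eq] at e
              rw [e]
              exact hh3 i
        have hz : zr (Fin.snoc N (fun j' => decide (j' = j)) : Fin (m+1) → Fin n → Bool) = zr N := by
          rw [zr_snoc, if_neg, add_zero]
          push_neg
          exact ⟨j, by simp⟩
        have hr : rl (Fin.snoc N (fun j' => decide (j' = j)) : Fin (m+1) → Fin n → Bool)
            = rl N + (if ∀ l < j, ∃ i : Fin m, N i l = true then 1 else 0) := by
          rw [rl_snoc]
          congr 1
          rw [Finset.card_filter]
          have hpt : ∀ j' : Fin n, (if decide (j' = j) = true ∧ ∀ l < j', ∃ i : Fin m, N i l = true then 1 else 0)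
              = if j' = j then (if ∀ l < j', ∃ i : Fin m, N i l = true then 1 else 0) else 0 := by
            intro j'
            by_cases hjj : j' = j <;> simp [hjj]
          rw [Finset.sum_congr rfl fun j' _ => hpt j',
            Finset.sum_ite_eq' Finset.univ j
              (fun j' => if ∀ l < j', ∃ i : Fin m, N i l = true then 1 else 0),
            if_pos (Finset.mem_univ j)]
        rw [hz, hr]
        exact if_congr (and_congr hp Iff.rfl) rfl rfl
      rw [Finset.sum_congr rfl fun j _ => hterm j]
      by_cases hN : pp N ∧ zr N = k
      · set U : Finset (Fin n) := Finset.univ.filter (fun j => ∀ i, N i j = false) with hU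
        have hUcompl := Finset.card_filter_add_card_filter_not
          (s := (Finset.univ : Finset (Fin n))) (p := fun j => ∃ i, N i j = true)
        have hUeq : (Finset.univ.filter (fun j : Fin n => ¬ ∃ i, N i j = true)) = U := by
          refine Finset.filter_congr fun j _ => ?_
          push_neg
          simp
        rw [hUeq, used_card N hN.1] at hUcompl
        have hkm : zr N ≤ m := zr_le N
        obtain ⟨hppN, hzrN⟩ := hN
        have huniv : (Finset.univ : Finset (Fin n)).card = n := by simp
        have hcardU : U.card = n - m + k := by omega
        have hUne : U.Nonempty := by
          rw [← Finset.card_pos, hcardU]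
          omega
        calc (∑ j : Fin n, if (pp N ∧ ∀ i, N i j = false) ∧ zr N = k
                then (X : Polynomial ℤ) ^ (rl N + if ∀ l < j, ∃ i : Fin m, N i l = true then 1 else 0) else 0)
            = ∑ j : Fin n, (if (∀ i, N i j = false)
                then (X : Polynomial ℤ) ^ rl N * X ^ (if ∀ l < j, ∃ i : Fin m, N i l = true then 1 else 0) else 0) := by
              refine Finset.sum_congr rfl fun j _ => ?_
              by_cases hj : ∀ i, N i j = false
              · rw [if_pos ⟨⟨hppN, hj⟩, hzrN⟩, if_pos hj, pow_add]
              · rw [if_neg (fun hcon => hj hcon.1.2), if_neg hj]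
          _ = ∑ j ∈ U, (X : Polynomial ℤ) ^ rl N * X ^ (if ∀ l < j, ∃ i : Fin m, N i l = true then 1 else 0) := by
              rw [Finset.sum_filter]
          _ = (X : Polynomial ℤ) ^ rl N * ∑ j ∈ U, (X : Polynomial ℤ) ^ (if ∀ l < j, l ∉ U then 1 else 0) := by
              rw [Finset.mul_sum]
              refine Finset.sum_congr rfl fun j _ => ?_
              have hiff : (∀ l < j, ∃ i : Fin m, N i l = true) ↔ (∀ l < j, l ∉ U) := by
                constructor
                · intro hh l hl hlU
                  rw [hU, Finset.mem_filter] at hlU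
                  obtain ⟨i, hi⟩ := hh l hl
                  rw [hlU.2 i] at hi
                  cases hi
                · intro hh l hl
                  have hlu := hh l hl
                  rw [hU, Finset.mem_filter] at hlu
                  push_neg at hlu
                  obtain ⟨i, hi⟩ := hlu (Finset.mem_univ l)
                  exact ⟨i, by simpa using hi⟩
              exact congrArg (fun e => (X : Polynomial ℤ) ^ rl N * (X : Polynomial ℤ) ^ e)
                (if_congr hiff rfl rfl)
          _ = (X : Polynomial ℤ) ^ rl N * (X + ((U.card - 1 : ℕ) : Polynomial ℤ)) := by
              rw [sum_unused U hUne]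
          _ = if pp N ∧ zr N = k then (X : Polynomial ℤ) ^ rl N * (X + (c : Polynomial ℤ)) else 0 := by
              rw [if_pos ⟨hppN, hzrN⟩, hcardU]
              have he : n - m + k - 1 = c := by omega
              rw [he]
      · rw [if_neg hN]
        refine Finset.sum_eq_zero fun j _ => ?_
        rw [if_neg]
        rintro ⟨⟨hp1, _⟩, hp2⟩
        exact hN ⟨hp1, hp2⟩
  rw [Finset.sum_congr rfl fun N _ => hinner N, Finset.sum_add_distrib]
  congr 1
  · cases k with
    | zero =>
      rw [if_pos rfl]
      exact Finset.sum_eq_zero fun N _ => if_neg (fun hcon => by omega)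
    | succ k' =>
      rw [if_neg (Nat.succ_ne_zero k'), Nat.succ_sub_one, T]
      exact Finset.sum_congr rfl fun N _ =>
        if_congr (and_congr Iff.rfl (add_left_inj 1)) rfl rfl
  · rw [T, Finset.mul_sum]
    refine Finset.sum_congr rfl fun N _ => ?_
    rw [mul_ite, mul_zero]
    exact if_congr Iff.rfl (mul_comm _ _) rfl


lemma T_zero (n k : ℕ) : T 0 n k = if k = 0 then 1 else 0 := by
  classical
  have h1 : ∀ M : Fin 0 → Fin n → Bool, pp M := fun M => ⟨fun i => i.elim0, fun i => i.elim0⟩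
  have h2 : ∀ M : Fin 0 → Fin n → Bool, zr M = 0 := fun M => by simp [zr]
  have h3 : ∀ M : Fin 0 → Fin n → Bool, rl M = 0 := fun M => by
    unfold rl
    rw [Finset.card_eq_zero, Finset.eq_empty_iff_forall_notMem]
    intro p _
    exact p.1.elim0
  have hterm : ∀ M : Fin 0 → Fin n → Bool,
      (if pp M ∧ zr M = k then (X : Polynomial ℤ) ^ rl M else 0) = if k = 0 then 1 else 0 := by
    intro M
    rw [h2, h3]
    by_cases hk : k = 0
    · rw [if_pos hk, if_pos ⟨h1 M, hk.symm⟩, pow_zero]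
    · rw [if_neg hk, if_neg (fun hcon => hk hcon.2.symm)]
  rw [T, Finset.sum_congr rfl fun M _ => hterm M, Finset.sum_const, Finset.card_univ]
  have hcard : Fintype.card (Fin 0 → Fin n → Bool) = 1 := by simp
  rw [hcard, one_smul]

lemma T_eq (n : ℕ) : ∀ m k : ℕ, m ≤ n →
    T m n k = (m.choose k : Polynomial ℤ) *
      ∏ i ∈ Finset.Ico (n - m + k) n, (X + (i : Polynomial ℤ)) := by
  intro m
  induction m with
  | zero =>
    intro k _
    cases k with
    | zero => simp [T_zero]
    | succ k' => simp [T_zero]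
  | succ m ih =>
    intro k hmn
    have hm : m ≤ n := le_trans (Nat.le_succ m) hmn
    rw [T_succ hmn k]
    cases k with
    | zero =>
      rw [if_pos rfl, ih 0 hm, zero_add]
      have e1 : n - (m + 1) + 0 = n - m - 1 := by omega
      have e2 : n - m + 0 = (n - m - 1) + 1 := by omega
      rw [e1, e2, Finset.prod_eq_prod_Ico_succ_bot (by omega : n - m - 1 < n)
        (fun i => (X : Polynomial ℤ) + (i : Polynomial ℤ))]
      simp only [Nat.choose_zero_right, Nat.cast_one, one_mul]
      ring
    | succ k' =>
      rw [if_neg (Nat.succ_ne_zero k'), Nat.succ_sub_one, ih k' hm, ih (k' + 1) hm]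
      have e0 : n - m - 1 + (k' + 1) = n - m + k' := by omega
      have e1 : n - (m + 1) + (k' + 1) = n - m + k' := by omega
      rw [e0, e1]
      by_cases hc : n - m + k' < n
      · have e2 : n - m + (k' + 1) = (n - m + k') + 1 := by omega
        rw [e2, Finset.prod_eq_prod_Ico_succ_bot hc
          (fun i => (X : Polynomial ℤ) + (i : Polynomial ℤ)), Nat.choose_succ_succ]
        push_cast
        ring
      · have hk'm : m < k' + 1 := by omega
        rw [Nat.choose_succ_succ, Nat.choose_eq_zero_of_lt hk'm]
        push_cast
        ring


end Aux


open scoped Classical in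
theorem stmt3 (n k : ℕ) :
    (∑ M : Fin n → Fin n → Bool,
        if PP.isPP M ∧ PP.zeroRows M = k then (Polynomial.X : Polynomial ℤ) ^ PP.rlminStat M else 0)
    = (n.choose k : Polynomial ℤ) *
        ∏ i ∈ Finset.Ico k n, (Polynomial.X + (i : Polynomial ℤ)) := by
  have hL : (∑ M : Fin n → Fin n → Bool,
      if PP.isPP M ∧ PP.zeroRows M = k then (Polynomial.X : Polynomial ℤ) ^ PP.rlminStat M else 0)
      = Aux.T n n k := by
    rw [Aux.T]
    exact Finset.sum_congr rfl fun M _ => if_congr Iff.rfl rfl rfl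
  rw [hL, Aux.T_eq n n k le_rfl]
  have he : n - n + k = k := by omega
  rw [he]
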